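/- Let f0, f1 be the automatic transformations of the Mealy automaton A₄ and let S be the semigroup of transformations they generate under composition (products written so that (f g)(u) = f(g(u))). Then every element s of S is equal, as a transformation, to a word of one of the following forms: (i) f0 f1^(2p₁) (f0 f1)^(p₂) s′ with p₁ ≥ 1, p₂ ≥ 0 and s′ ∈ {1, f1, f0, f0²}, excluding the combination p₁ = 1, p₂ = 0, s′ = 1; or (ii) f1^(p₁) (f0 f1)^(p₂) s′ with p₁ ≥ 0, p₂ ≥ 1 and s′ ∈ {1, f1, f0, f0²}; or (iii) f1^(p₁) s′ with p₁ ≥ 0 and s′ ∈ {f1, f0, f0²}. (Here 1 denotes the empty factor, i.e. the identity transformation.) -/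
import Mathlib


/-- The sequence of states visited by a Mealy automaton with transition function `tr`,
started at state `q`, while reading the infinite word `u`. -/
def stateSeq {X Q : Type*} (tr : X → Q → Q) (q : Q) (u : ℕ → X) : ℕ → Q
  | 0 => q
  | k + 1 => tr (u k) (stateSeq tr q u k)

/-- The automatic transformation of infinite words defined by the Mealy automaton with
transition function `tr` and output function `out` at the state `q`. -/
def autTrans {X Q : Type*} (tr : X → Q → Q) (out : X → Q → X) (q : Q) (u : ℕ → X) : ℕ → X :=
  fun n => out (u n) (stateSeq tr q u n)

/-- The transformation given by a word of states: the product (composition, applied from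
right to left) of the corresponding automatic transformations. -/
def wordTrans {X Q : Type*} (tr : X → Q → Q) (out : X → Q → X) (w : List Q) :
    (ℕ → X) → (ℕ → X) :=
  (w.map (autTrans tr out)).foldr (· ∘ ·) id

/-- The growth function of a Mealy automaton: `growth tr out n` is the number of distinct
transformations of infinite words obtained as compositions of exactly `n` automatic
transformations of the automaton. -/
noncomputable def growth {X Q : Type*} (tr : X → Q → Q) (out : X → Q → X) (n : ℕ) : ℕ :=
  Set.ncard { g : (ℕ → X) → (ℕ → X) | ∃ w : List Q, w.length = n ∧ wordTrans tr out w = g }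

/-- The `i`-th finite difference of a function `γ`. -/
def fdiff (γ : ℕ → ℤ) : ℕ → ℕ → ℤ
  | 0, n => γ n
  | i + 1, n => fdiff γ i n - fdiff γ i (n - 1)

/-- Output function of the automaton `A₄`: at `q0` the outputs of `(x0,x1,x2,x3)` are
`(x0,x0,x1,x1)`; at `q1` they are `(x2,x3,x0,x1)`. -/
def a4Out : Fin 4 → Fin 2 → Fin 4 := fun x q =>
  if q = 0 then (if x = 0 then 0 else if x = 1 then 0 else 1)
  else (if x = 0 then 2 else if x = 1 then 3 else if x = 2 then 0 else 1)

/-- Transition function of the automaton `A₄`: all transitions from `q0` stay at `q0`;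
from `q1` the transition goes to `q0` on reading `x0` and stays at `q1` otherwise. -/
def a4Tr : Fin 4 → Fin 2 → Fin 2 := fun x q =>
  if q = 0 then 0 else (if x = 0 then 0 else 1)

/-- The automatic transformations `f0, f1` of the automaton `A₄` at states `q0, q1`. -/
def a4F (q : Fin 2) : (ℕ → Fin 4) → (ℕ → Fin 4) := autTrans a4Tr a4Out q

section Machinery

def mstep : Fin 4 → List (Fin 2) → Fin 4 × List (Fin 2)
  | x, [] => (x, [])
  | x, q :: qs =>
    let p := mstep x qs
    (a4Out p.1 q, a4Tr p.1 q :: p.2)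

def mstates (w : List (Fin 2)) (u : ℕ → Fin 4) : ℕ → List (Fin 2)
  | 0 => w
  | n + 1 => (mstep (u n) (mstates w u n)).2

lemma wordTrans_cons (q : Fin 2) (w : List (Fin 2)) :
    wordTrans a4Tr a4Out (q :: w) = a4F q ∘ wordTrans a4Tr a4Out w := rfl

lemma wordTrans_mstep (w : List (Fin 2)) :
    ∀ u n, wordTrans a4Tr a4Out w u n = (mstep (u n) (mstates w u n)).1 := by
  induction w with
  | nil =>
    intro u n
    have : ∀ n, mstates [] u n = [] := by
      intro n; induction n with
      | zero => rfl
      | succ n ihn => show (mstep (u n) (mstates [] u n)).2 = []; rw [ihn]; rfl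
    rw [this]; rfl
  | cons q w ih =>
    have hst : ∀ u n, mstates (q :: w) u n
        = stateSeq a4Tr q (wordTrans a4Tr a4Out w u) n :: mstates w u n := by
      intro u n
      induction n with
      | zero => rfl
      | succ n ihn =>
        show (mstep (u n) (mstates (q :: w) u n)).2 = _
        rw [ihn]
        show a4Tr (mstep (u n) (mstates w u n)).1 _ :: (mstep (u n) (mstates w u n)).2 = _
        rw [← ih u n]
        rfl
    intro u n
    rw [wordTrans_cons, hst]
    show a4Out (wordTrans a4Tr a4Out w u n) _ = _
    rw [ih u n]
    rfl

def bisimCheck (R : List (List (Fin 2) × List (Fin 2))) : Bool :=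
  R.all fun st => (List.finRange 4).all fun x =>
    decide ((mstep x st.1).1 = (mstep x st.2).1) &&
    decide (((mstep x st.1).2, (mstep x st.2).2) ∈ R)

lemma bisim_words (w1 w2 : List (Fin 2)) (R : List (List (Fin 2) × List (Fin 2)))
    (h0 : (w1, w2) ∈ R) (hR : bisimCheck R = true) :
    wordTrans a4Tr a4Out w1 = wordTrans a4Tr a4Out w2 := by
  have hR' : ∀ st ∈ R, ∀ x : Fin 4, (mstep x st.1).1 = (mstep x st.2).1 ∧
      ((mstep x st.1).2, (mstep x st.2).2) ∈ R := by
    intro st hst x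
    have := (List.all_eq_true.mp hR) st hst
    have := (List.all_eq_true.mp this) x (List.mem_finRange x)
    simp only [Bool.and_eq_true, decide_eq_true_eq] at this
    exact this
  funext u n
  have key : ∀ n, (mstates w1 u n, mstates w2 u n) ∈ R := by
    intro n
    induction n with
    | zero => exact h0
    | succ n ihn => exact (hR' _ ihn (u n)).2
  rw [wordTrans_mstep, wordTrans_mstep]
  exact (hR' _ (key n) (u n)).1

lemma rel_C : wordTrans a4Tr a4Out [1,0,1,1,1] = wordTrans a4Tr a4Out [1,0,1] := by
  apply bisim_words _ _
    [([0,0,0,0,0], [0,0,0]), ([0,0,0,0,1], [0,0,1]), ([0,0,0,1,0], [0,0,0]),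
     ([0,0,1,0,0], [0,0,0]), ([0,0,1,0,1], [0,0,1]), ([0,0,1,1,1], [0,0,1]),
     ([1,0,0,1,0], [1,0,0]), ([1,0,1,1,1], [1,0,1])]
  · decide
  · decide

lemma rel_D : wordTrans a4Tr a4Out [1,0,1,1,0] = wordTrans a4Tr a4Out [1,0,0] := by
  apply bisim_words _ _
    [([0,0,0,0,0], [0,0,0]), ([0,0,1,0,0], [0,0,0]),
     ([0,0,1,1,0], [0,0,0]), ([1,0,1,1,0], [1,0,0])]
  · decide
  · decide

lemma rc' (v : ℕ → Fin 4) :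
    a4F 1 (a4F 0 (a4F 1 (a4F 1 (a4F 1 v)))) = a4F 1 (a4F 0 (a4F 1 v)) :=
  congrFun rel_C v

lemma rd' (v : ℕ → Fin 4) :
    a4F 1 (a4F 0 (a4F 1 (a4F 1 (a4F 0 v)))) = a4F 1 (a4F 0 (a4F 0 v)) :=
  congrFun rel_D v

end Machinery

section Semantics

lemma stateSeq_zero (u : ℕ → Fin 4) : ∀ n, stateSeq a4Tr 0 u n = 0 := by
  intro n; induction n with
  | zero => rfl
  | succ n ih => show a4Tr (u n) (stateSeq a4Tr 0 u n) = 0; rw [ih]; rfl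

lemma g_apply (u : ℕ → Fin 4) (n : ℕ) : a4F 0 u n = a4Out (u n) 0 := by
  show a4Out (u n) (stateSeq a4Tr 0 u n) = _
  rw [stateSeq_zero]

lemma gg_eq (v : ℕ → Fin 4) : a4F 0 (a4F 0 v) = fun _ => 0 := by
  funext n
  rw [g_apply, g_apply]
  have : ∀ x : Fin 4, a4Out (a4Out x 0) 0 = 0 := by decide
  exact this (v n)

lemma stateSeq_h (u : ℕ → Fin 4) (N : ℕ) (hN : ∀ k < N, u k ≠ 0) :
    ∀ n ≤ N, stateSeq a4Tr 1 u n = 1 := by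
  intro n hn
  induction n with
  | zero => rfl
  | succ n ih =>
    show a4Tr (u n) (stateSeq a4Tr 1 u n) = 1
    rw [ih (by omega)]
    have h1 : u n ≠ 0 := hN n (by omega)
    simp [a4Tr, h1]

lemma stateSeq_h_zero (u : ℕ → Fin 4) (N : ℕ) (hz : u N = 0)
    (hN : ∀ k < N, u k ≠ 0) : ∀ n, N < n → stateSeq a4Tr 1 u n = 0 := by
  intro n hn
  induction n with
  | zero => omega
  | succ n ih =>
    show a4Tr (u n) (stateSeq a4Tr 1 u n) = 0
    rcases Nat.lt_or_ge N n with h | h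
    · rw [ih h]; rfl
    · have hn' : n = N := by omega
      rw [hn', hz, stateSeq_h u N hN N le_rfl]
      rfl

def tset (N i : ℕ) : ℕ → Fin 4 := fun n =>
  if n < N then 3 else if n = N then 2 else if n < N + 1 + i then 1 else 0

def sset (N i : ℕ) : ℕ → Fin 4 := fun n =>
  if n < N then 1 else if n = N then 0 else if n < N + 1 + i then 3
  else if n = N + 1 + i then 2 else 0

def zo (N : ℕ) : ℕ → Fin 4 := fun n => if n ≤ N then 1 else 0

lemma h_tset (N i : ℕ) : a4F 1 (tset N i) = sset N i := by
  have hnz : ∀ k < N + 1 + i, tset N i k ≠ 0 := by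
    intro k hk
    unfold tset
    split_ifs with h1 h2 h3 <;> simp_all <;> omega
  have hz : tset N i (N + 1 + i) = 0 := by
    unfold tset; split_ifs with h1 h2 h3 <;> first | omega | rfl
  funext n
  show a4Out (tset N i n) (stateSeq a4Tr 1 (tset N i) n) = sset N i n
  rcases Nat.lt_or_ge n (N + 1 + i + 1) with hn | hn
  · rw [stateSeq_h _ (N + 1 + i) hnz n (by omega)]
    unfold tset sset
    split_ifs with h1 h2 h3 h4 <;> first | rfl | omega | (exfalso; omega) | skip
    all_goals (simp [a4Out] <;> omega)
  · rw [stateSeq_h_zero _ (N + 1 + i) hz hnz n (by omega)]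
    unfold tset sset
    split_ifs with h1 h2 h3 h4 <;> first | rfl | omega

lemma h_sset (N i : ℕ) : a4F 1 (sset N i) = tset N (i + 1) := by
  have hnz : ∀ k < N, sset N i k ≠ 0 := by
    intro k hk; unfold sset; split_ifs <;> simp_all
  have hz : sset N i N = 0 := by
    unfold sset; split_ifs <;> first | omega | rfl
  funext n
  show a4Out (sset N i n) (stateSeq a4Tr 1 (sset N i) n) = tset N (i + 1) n
  rcases Nat.lt_or_ge n (N + 1) with hn | hn
  · rw [stateSeq_h _ N hnz n (by omega)]
    unfold sset tset
    split_ifs <;> first | rfl | omega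
  · rw [stateSeq_h_zero _ N hz hnz n (by omega)]
    unfold sset tset
    split_ifs <;> first | rfl | omega

lemma g_tset (N i : ℕ) : a4F 0 (tset N i) = zo N := by
  funext n
  rw [g_apply]
  unfold tset zo
  split_ifs <;> first | rfl | omega

lemma h_zero_one (w : ℕ → Fin 4) (hw : ∀ n, w n = 0 ∨ w n = 1) (N : ℕ)
    (hz : w N = 0) (hN : ∀ k < N, w k ≠ 0) : a4F 1 w = tset N 0 := by
  funext n
  show a4Out (w n) (stateSeq a4Tr 1 w n) = tset N 0 n
  rcases Nat.lt_or_ge n (N + 1) with hn | hn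
  · rw [stateSeq_h _ N hN n (by omega)]
    rcases Nat.lt_or_ge n N with h | h
    · have h1 : w n = 1 := by
        rcases hw n with h' | h'
        · exact absurd h' (hN n h)
        · exact h'
      rw [h1]
      unfold tset; split_ifs <;> first | rfl | omega
    · have hn' : n = N := by omega
      rw [hn', hz]
      unfold tset; split_ifs <;> first | rfl | omega
  · rw [stateSeq_h_zero _ N hz hN n (by omega)]
    have : a4Out (w n) 0 = 0 := by
      rcases hw n with h' | h' <;> rw [h'] <;> rfl
    rw [this]
    unfold tset; split_ifs <;> first | rfl | omega

lemma h_const1 : a4F 1 (fun _ => (1 : Fin 4)) = fun _ => 3 := by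
  funext n
  show a4Out 1 (stateSeq a4Tr 1 (fun _ => (1:Fin 4)) n) = 3
  rw [stateSeq_h (fun _ => (1:Fin 4)) n (by intro k _; show (1:Fin 4) ≠ 0; decide) n le_rfl]
  rfl

lemma h_const3 : a4F 1 (fun _ => (3 : Fin 4)) = fun _ => 1 := by
  funext n
  show a4Out 3 (stateSeq a4Tr 1 (fun _ => (3:Fin 4)) n) = 1
  rw [stateSeq_h (fun _ => (3:Fin 4)) n (by intro k _; show (3:Fin 4) ≠ 0; decide) n le_rfl]
  rfl

lemma gv_zero_one (v : ℕ → Fin 4) (n : ℕ) : a4F 0 v n = 0 ∨ a4F 0 v n = 1 := by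
  rw [g_apply]
  have : ∀ x : Fin 4, a4Out x 0 = 0 ∨ a4Out x 0 = 1 := by decide
  exact this (v n)

lemma rel_F (j : ℕ) (v : ℕ → Fin 4) :
    a4F 0 ((a4F 1)^[2 * j + 1] (a4F 0 v)) = a4F 0 (a4F 1 (a4F 0 v)) := by
  by_cases hex : ∃ n, a4F 0 v n = 0
  · classical
    set N := Nat.find hex with hNdef
    have hz : a4F 0 v N = 0 := Nat.find_spec hex
    have hN : ∀ k < N, a4F 0 v k ≠ 0 := fun k hk => Nat.find_min hex hk
    have h1 : a4F 1 (a4F 0 v) = tset N 0 := h_zero_one _ (gv_zero_one v) N hz hN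
    have key : ∀ i, (a4F 1)^[2 * i] (tset N 0) = tset N i := by
      intro i
      induction i with
      | zero => rfl
      | succ i ih =>
        have h2 : 2 * (i + 1) = 2 * i + 1 + 1 := by omega
        rw [h2, Function.iterate_succ_apply', Function.iterate_succ_apply', ih,
          h_tset, h_sset]
    have h3 : (a4F 1)^[2 * j + 1] (a4F 0 v) = tset N j := by
      rw [Function.iterate_succ_apply, h1, key j]
    rw [h3, h1, g_tset, g_tset]
  · have hone : a4F 0 v = fun _ => 1 := by
      funext n
      rcases gv_zero_one v n with h | h
      · exact absurd ⟨n, h⟩ hex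
      · exact h
    have key : ∀ i, (a4F 1)^[2 * i + 1] (fun _ => (1:Fin 4)) = fun _ => 3 := by
      intro i
      induction i with
      | zero => exact h_const1
      | succ i ih =>
        have h2 : 2 * (i + 1) + 1 = 2 * i + 1 + 1 + 1 := by omega
        rw [h2, Function.iterate_succ_apply', Function.iterate_succ_apply', ih,
          h_const3, h_const1]
    rw [hone]
    have h0 : (a4F 1)^[2 * 0 + 1] (fun _ => (1:Fin 4)) = fun _ => 3 := key 0
    simp only [Nat.mul_zero, Nat.zero_add, Function.iterate_one] at h0
    rw [key j, h0]

end Semantics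

section Derived

lemma aux_hgh (m : ℕ) (v : ℕ → Fin 4) :
    a4F 1 (a4F 0 ((a4F 1)^[m + 3] v)) = a4F 1 (a4F 0 ((a4F 1)^[m + 1] v)) := by
  have h3 : (a4F 1)^[m + 3] v = a4F 1 (a4F 1 (a4F 1 ((a4F 1)^[m] v))) := by
    rw [show m + 3 = m + 2 + 1 from rfl, Function.iterate_succ_apply',
      show m + 2 = m + 1 + 1 from rfl, Function.iterate_succ_apply',
      Function.iterate_succ_apply']
  have h1 : (a4F 1)^[m + 1] v = a4F 1 ((a4F 1)^[m] v) := Function.iterate_succ_apply' _ _ _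
  rw [h3, h1, rc']

lemma hgh_pow (j : ℕ) (hj : 1 ≤ j) (v : ℕ → Fin 4) :
    a4F 1 (a4F 0 ((a4F 1)^[2 * j] v)) = a4F 1 (a4F 0 (a4F 1 (a4F 1 v))) := by
  induction j with
  | zero => omega
  | succ j ih =>
    rcases Nat.eq_or_lt_of_le hj with h | h
    · have h2 : 2 * (j + 1) = 2 := by omega
      rw [h2]
      show a4F 1 (a4F 0 ((a4F 1)^[1+1] v)) = _
      rw [Function.iterate_succ_apply', Function.iterate_one]
    · have hj1 : 1 ≤ j := by omega
      have h2 : 2 * (j + 1) = (2 * j - 1) + 3 := by omega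
      have h4 : 2 * j - 1 + 1 = 2 * j := by omega
      rw [h2, aux_hgh, h4]
      exact ih hj1

lemma h_ne_id : a4F 1 ≠ id := by
  intro hh
  have := congrFun (congrFun hh (fun _ => 2)) 0
  have h2 : a4F 1 (fun _ => (2:Fin 4)) 0 = 0 := by decide
  rw [h2] at this
  exact absurd this (by decide)

lemma g_ne_id : a4F 0 ≠ id := by
  intro hh
  have := congrFun (congrFun hh (fun _ => 2)) 0
  have h2 : a4F 0 (fun _ => (2:Fin 4)) 0 = 1 := by decide
  rw [h2] at this
  exact absurd this (by decide)

lemma gg_ne_id : a4F 0 ∘ a4F 0 ≠ id := by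
  intro hh
  have := congrFun (congrFun hh (fun _ => 2)) 0
  have h2 : (a4F 0 ∘ a4F 0) (fun _ => (2:Fin 4)) 0 = 0 := by decide
  rw [h2] at this
  exact absurd this (by decide)

end Derived

/-- Normal form for the semigroup `S_{A₄}`: every element of the semigroup generated by the
automatic transformations `f0, f1` of `A₄` (i.e. every composition of a nonempty word in
`f0, f1`) equals, as a transformation, a word of one of the forms
`f0 f1^(2p₁) (f0 f1)^(p₂) s′` with `p₁ ≥ 1`, `p₂ ≥ 0`, `s′ ∈ {1, f1, f0, f0²}`, excluding
`p₁ = 1 ∧ p₂ = 0 ∧ s′ = 1`; or `f1^(p₁) (f0 f1)^(p₂) s′` with `p₁ ≥ 0`, `p₂ ≥ 1`,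
`s′ ∈ {1, f1, f0, f0²}`; or `f1^(p₁) s′` with `p₁ ≥ 0`, `s′ ∈ {f1, f0, f0²}`. -/
theorem normal_form_a4 :
    ∀ w : List (Fin 2), w ≠ [] →
      (∃ p₁ p₂ : ℕ, 1 ≤ p₁ ∧
        ∃ s' ∈ ({id, a4F 1, a4F 0, a4F 0 ∘ a4F 0} :
            Set ((ℕ → Fin 4) → (ℕ → Fin 4))),
          ¬(p₁ = 1 ∧ p₂ = 0 ∧ s' = id) ∧
          wordTrans a4Tr a4Out w =
            a4F 0 ∘ (a4F 1)^[2 * p₁] ∘ (a4F 0 ∘ a4F 1)^[p₂] ∘ s') ∨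
      (∃ p₁ p₂ : ℕ, 1 ≤ p₂ ∧
        ∃ s' ∈ ({id, a4F 1, a4F 0, a4F 0 ∘ a4F 0} :
            Set ((ℕ → Fin 4) → (ℕ → Fin 4))),
          wordTrans a4Tr a4Out w = (a4F 1)^[p₁] ∘ (a4F 0 ∘ a4F 1)^[p₂] ∘ s') ∨
      (∃ p₁ : ℕ,
        ∃ s' ∈ ({a4F 1, a4F 0, a4F 0 ∘ a4F 0} :
            Set ((ℕ → Fin 4) → (ℕ → Fin 4))),
          wordTrans a4Tr a4Out w = (a4F 1)^[p₁] ∘ s') := by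
  intro w hw
  induction w with
  | nil => exact absurd rfl hw
  | cons a w ih =>
    by_cases hw0 : w = []
    · subst hw0
      have ha : a = 0 ∨ a = 1 := by
        rcases a with ⟨_ | _ | n, hn⟩
        · left; rfl
        · right; rfl
        · omega
      rcases ha with rfl | rfl
      · right; right
        exact ⟨0, a4F 0, by simp, rfl⟩
      · right; right
        exact ⟨0, a4F 1, by simp, rfl⟩
    · have ha : a = 0 ∨ a = 1 := by
        rcases a with ⟨_ | _ | n, hn⟩
        · left; rfl
        · right; rfl
        · omega
      rcases ha with rfl | rfl
      · -- prepend g = a4F 0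
        rcases ih hw0 with ⟨p₁, p₂, hp₁, s', hs', hexcl, hT⟩ | ⟨p₁, p₂, hp₂, s', hs', hT⟩ |
          ⟨p₁, s', hs', hT⟩
        · -- form1 : absorb into g∘g
          right; right
          refine ⟨0, a4F 0 ∘ a4F 0, by simp, ?_⟩
          rw [wordTrans_cons, hT]
          funext u
          simp only [Function.comp_apply, Function.iterate_zero_apply]
          rw [gg_eq ((a4F 1)^[2 * p₁] ((a4F 0 ∘ a4F 1)^[p₂] (s' u))), gg_eq u]
        · -- form2
          rcases Nat.even_or_odd p₁ with ⟨j, hj⟩ | ⟨j, hj⟩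
          · by_cases hj0 : j = 0
            · -- p₁ = 0 : absorb
              right; right
              refine ⟨0, a4F 0 ∘ a4F 0, by simp, ?_⟩
              obtain ⟨m, hm⟩ : ∃ m, p₂ = m + 1 := ⟨p₂ - 1, by omega⟩
              have hp0 : p₁ = 0 := by omega
              rw [wordTrans_cons, hT, hp0, hm]
              funext u
              simp only [Function.comp_apply, Function.iterate_zero_apply]
              rw [Function.iterate_succ_apply' (a4F 0 ∘ a4F 1) m (s' u)]
              simp only [Function.comp_apply]
              rw [gg_eq (a4F 1 ((a4F 0 ∘ a4F 1)^[m] (s' u))), gg_eq u]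
            · -- p₁ = 2j, j ≥ 1 : form1
              left
              refine ⟨j, p₂, by omega, s', hs', ?_, ?_⟩
              · rintro ⟨-, h2, -⟩; omega
              · rw [wordTrans_cons, hT]
                have h2 : p₁ = 2 * j := by omega
                rw [h2]
          · -- p₁ = 2j+1 : use rel_F
            right; left
            refine ⟨0, p₂ + 1, by omega, s', hs', ?_⟩
            obtain ⟨m, hm⟩ : ∃ m, p₂ = m + 1 := ⟨p₂ - 1, by omega⟩
            rw [wordTrans_cons, hT, hj, hm]
            funext u
            simp only [Function.comp_apply, Function.iterate_zero_apply]
            rw [Function.iterate_succ_apply' (a4F 0 ∘ a4F 1) (m + 1) (s' u),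
              Function.iterate_succ_apply' (a4F 0 ∘ a4F 1) m (s' u)]
            simp only [Function.comp_apply]
            rw [rel_F j (a4F 1 ((a4F 0 ∘ a4F 1)^[m] (s' u)))]
        · -- form3
          simp only [Set.mem_insert_iff, Set.mem_singleton_iff] at hs'
          rcases hs' with h | h | h <;> subst h
          · -- s' = h
            rcases Nat.even_or_odd p₁ with ⟨j, hj⟩ | ⟨j, hj⟩
            · by_cases hj0 : j = 0
              · -- p₁ = 0 : g∘h
                right; left
                refine ⟨0, 1, le_rfl, id, by simp, ?_⟩
                have h0 : p₁ = 0 := by omega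
                rw [wordTrans_cons, hT, h0]
                funext u
                simp only [Function.comp_apply, Function.iterate_zero_apply,
                  Function.iterate_one, id_eq]
              · -- p₁ = 2j, j ≥ 1 : form1 (j, 0, h)
                left
                refine ⟨j, 0, by omega, a4F 1, by simp, ?_, ?_⟩
                · rintro ⟨-, -, h3⟩; exact h_ne_id h3
                · rw [wordTrans_cons, hT]
                  have h2 : p₁ = 2 * j := by omega
                  rw [h2]
                  funext u
                  simp only [Function.comp_apply, Function.iterate_zero_apply]
            · by_cases hj0 : j = 0
              · -- p₁ = 1 : g∘h² = form2 (0,1,h)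
                right; left
                refine ⟨0, 1, le_rfl, a4F 1, by simp, ?_⟩
                have h0 : p₁ = 1 := by omega
                rw [wordTrans_cons, hT, h0]
                funext u
                simp only [Function.comp_apply, Function.iterate_one, Function.iterate_zero_apply]
              · -- p₁ = 2j+1, j ≥ 1 : form1 (j+1, 0, id)
                left
                refine ⟨j + 1, 0, by omega, id, by simp, ?_, ?_⟩
                · rintro ⟨h1, -, -⟩; omega
                · rw [wordTrans_cons, hT, hj]
                  funext u
                  simp only [Function.comp_apply, Function.iterate_zero_apply, id_eq]
                  rw [← Function.iterate_succ_apply]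
                  have h2 : (2 * j + 1).succ = 2 * (j + 1) := by omega
                  rw [h2]
          · -- s' = g
            rcases Nat.even_or_odd p₁ with ⟨j, hj⟩ | ⟨j, hj⟩
            · by_cases hj0 : j = 0
              · -- p₁ = 0 : g∘g
                right; right
                refine ⟨0, a4F 0 ∘ a4F 0, by simp, ?_⟩
                have h0 : p₁ = 0 := by omega
                rw [wordTrans_cons, hT, h0]
                funext u
                simp only [Function.comp_apply, Function.iterate_zero_apply]
              · -- p₁ = 2j, j ≥ 1 : form1 (j, 0, g)
                left
                refine ⟨j, 0, by omega, a4F 0, by simp, ?_, ?_⟩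
                · rintro ⟨-, -, h3⟩; exact g_ne_id h3
                · rw [wordTrans_cons, hT]
                  have h2 : p₁ = 2 * j := by omega
                  rw [h2]
                  funext u
                  simp only [Function.comp_apply, Function.iterate_zero_apply]
            · -- p₁ = 2j+1 : rel_F : form2(0,1,g)
              right; left
              refine ⟨0, 1, le_rfl, a4F 0, by simp, ?_⟩
              rw [wordTrans_cons, hT, hj]
              funext u
              simp only [Function.comp_apply, Function.iterate_zero_apply, Function.iterate_one]
              rw [rel_F j u]
          · -- s' = g∘g
            rcases Nat.even_or_odd p₁ with ⟨j, hj⟩ | ⟨j, hj⟩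
            · by_cases hj0 : j = 0
              · -- p₁ = 0 : g∘g∘g = g∘g
                right; right
                refine ⟨0, a4F 0 ∘ a4F 0, by simp, ?_⟩
                have h0 : p₁ = 0 := by omega
                rw [wordTrans_cons, hT, h0]
                funext u
                simp only [Function.comp_apply, Function.iterate_zero_apply]
                rw [gg_eq (a4F 0 u), gg_eq u]
              · -- p₁ = 2j, j ≥ 1 : form1 (j, 0, gg)
                left
                refine ⟨j, 0, by omega, a4F 0 ∘ a4F 0, by simp, ?_, ?_⟩
                · rintro ⟨-, -, h3⟩; exact gg_ne_id h3
                · rw [wordTrans_cons, hT]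
                  have h2 : p₁ = 2 * j := by omega
                  rw [h2]
                  funext u
                  simp only [Function.comp_apply, Function.iterate_zero_apply]
            · -- p₁ = 2j+1 : rel_F : form2(0,1,gg)
              right; left
              refine ⟨0, 1, le_rfl, a4F 0 ∘ a4F 0, by simp, ?_⟩
              rw [wordTrans_cons, hT, hj]
              funext u
              simp only [Function.comp_apply, Function.iterate_zero_apply, Function.iterate_one]
              rw [rel_F j (a4F 0 u)]
      · -- prepend h = a4F 1
        rcases ih hw0 with ⟨p₁, p₂, hp₁, s', hs', hexcl, hT⟩ | ⟨p₁, p₂, hp₂, s', hs', hT⟩ |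
          ⟨p₁, s', hs', hT⟩
        · -- form1
          by_cases hp2 : p₂ = 0
          · simp only [Set.mem_insert_iff, Set.mem_singleton_iff] at hs'
            rcases hs' with h | h | h | h <;> subst h
            · -- s' = id : form2 (1,1,h)
              right; left
              refine ⟨1, 1, le_rfl, a4F 1, by simp, ?_⟩
              rw [wordTrans_cons, hT, hp2]
              funext u
              simp only [Function.comp_apply, Function.iterate_zero_apply,
                Function.iterate_one, id_eq]
              rw [hgh_pow p₁ hp₁ u]
            · -- s' = h : rc' : form2 (1,1,id)
              right; left
              refine ⟨1, 1, le_rfl, id, by simp, ?_⟩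
              rw [wordTrans_cons, hT, hp2]
              funext u
              simp only [Function.comp_apply, Function.iterate_zero_apply,
                Function.iterate_one, id_eq]
              rw [hgh_pow p₁ hp₁ (a4F 1 u), rc' u]
            · -- s' = g : rd' : form3 (1, gg)
              right; right
              refine ⟨1, a4F 0 ∘ a4F 0, by simp, ?_⟩
              rw [wordTrans_cons, hT, hp2]
              funext u
              simp only [Function.comp_apply, Function.iterate_zero_apply,
                Function.iterate_one]
              rw [hgh_pow p₁ hp₁ (a4F 0 u), rd' u]
            · -- s' = gg : form3 (1, gg)
              right; right
              refine ⟨1, a4F 0 ∘ a4F 0, by simp, ?_⟩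
              rw [wordTrans_cons, hT, hp2]
              funext u
              simp only [Function.comp_apply, Function.iterate_zero_apply,
                Function.iterate_one]
              rw [hgh_pow p₁ hp₁ (a4F 0 (a4F 0 u)), rd' (a4F 0 u),
                gg_eq (a4F 0 u), gg_eq u]
          · -- p₂ = m+1 : form3 (1, gg)
            right; right
            refine ⟨1, a4F 0 ∘ a4F 0, by simp, ?_⟩
            obtain ⟨m, hm⟩ : ∃ m, p₂ = m + 1 := ⟨p₂ - 1, by omega⟩
            rw [wordTrans_cons, hT, hm]
            funext u
            simp only [Function.comp_apply, Function.iterate_one]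
            rw [Function.iterate_succ_apply' (a4F 0 ∘ a4F 1) m (s' u)]
            simp only [Function.comp_apply]
            rw [hgh_pow p₁ hp₁ (a4F 0 (a4F 1 ((a4F 0 ∘ a4F 1)^[m] (s' u)))),
              rd' (a4F 1 ((a4F 0 ∘ a4F 1)^[m] (s' u))),
              gg_eq (a4F 1 ((a4F 0 ∘ a4F 1)^[m] (s' u))), gg_eq u]
        · -- form2 : bump p₁
          right; left
          refine ⟨p₁ + 1, p₂, hp₂, s', hs', ?_⟩
          rw [wordTrans_cons, hT]
          funext u
          simp only [Function.comp_apply]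
          exact (Function.iterate_succ_apply' (a4F 1) p₁ _).symm
        · -- form3 : bump p₁
          right; right
          refine ⟨p₁ + 1, s', hs', ?_⟩
          rw [wordTrans_cons, hT]
          funext u
          simp only [Function.comp_apply]
          exact (Function.iterate_succ_apply' (a4F 1) p₁ _).symm
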